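/- Let n ≥ 4 be an even integer and let G = D_{2n} be the dihedral group of order 2n. Then G has a strict Z(G)-partition, i.e. a strict S-partition with S equal to the center of G (given by the subgroup ⟨x⟩ together with the centralizers of the reflections; these components need not have equal orders). -/

import Mathlib

/-- A strict `S`-partition of a group `G`: a finite collection of at least two proper
subgroups of `G` covering `G`, any two distinct members of which intersect exactly in `S`. -/
def IsStrictPartition {G : Type*} [Group G] (S : Subgroup G) (P : Finset (Subgroup G)) : Prop :=
  2 ≤ P.card ∧ (∀ H ∈ P, H ≠ ⊤) ∧ (∀ g : G, ∃ H ∈ P, g ∈ H) ∧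
    ∀ H ∈ P, ∀ K ∈ P, H ≠ K → H ⊓ K = S

/-- An `ES`-partition: a strict `S`-partition all of whose components have the same order. -/
def IsESPartition {G : Type*} [Group G] (S : Subgroup G) (P : Finset (Subgroup G)) : Prop :=
  IsStrictPartition S P ∧ ∀ H ∈ P, ∀ K ∈ P, Nat.card H = Nat.card K

namespace DihedralPartitionAux

open DihedralGroup

variable {n : ℕ}

/-- The rotation subgroup. -/
def rot (n : ℕ) : Subgroup (DihedralGroup n) where
  carrier := {g | ∃ i, g = r i}
  one_mem' := ⟨0, rfl⟩
  mul_mem' := by rintro _ _ ⟨i, rfl⟩ ⟨j, rfl⟩; exact ⟨i + j, rfl⟩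
  inv_mem' := by rintro _ ⟨i, rfl⟩; exact ⟨-i, rfl⟩

theorem inv_r (i : ZMod n) : (r i)⁻¹ = r (-i) := rfl
theorem inv_sr (i : ZMod n) : (sr i)⁻¹ = sr i := rfl

/-- The Klein-type subgroup {1, r m, sr i, sr (i+m)} where m + m = 0. -/
def klein (m : ZMod n) (h2 : m + m = 0) (i : ZMod n) : Subgroup (DihedralGroup n) where
  carrier := {1, r m, sr i, sr (i + m)}
  one_mem' := Or.inl rfl
  mul_mem' := by
    have hm : -m = m := neg_eq_of_add_eq_zero_left h2
    rintro a b (rfl | rfl | rfl | rfl) (rfl | rfl | rfl | rfl) <;>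
      simp [-r_zero, one_def, Set.mem_insert_iff, sub_eq_add_neg, hm, h2, add_assoc, add_comm,
        add_left_comm] <;>
      first
        | (left; abel_nf; simp [two_mul, h2])
        | (right; left; abel_nf; simp [two_mul, h2])
        | (right; right; left; abel_nf; simp [two_mul, h2])
        | (right; right; right; abel_nf; simp [two_mul, h2])
  inv_mem' := by
    have hm : -m = m := neg_eq_of_add_eq_zero_left h2
    rintro a (rfl | rfl | rfl | rfl) <;>
      simp_all [-r_zero, one_def, Set.mem_insert_iff, inv_r, inv_sr]

theorem mem_klein {m : ZMod n} {h2 : m + m = 0} {i : ZMod n} {g : DihedralGroup n} :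
    g ∈ klein m h2 i ↔ g = 1 ∨ g = r m ∨ g = sr i ∨ g = sr (i + m) := by
  show g ∈ ({1, r (n := n) m, sr i, sr (i + m)} : Set _) ↔ _
  simp [Set.mem_insert_iff]

end DihedralPartitionAux

namespace DihedralPartitionAux

open DihedralGroup

section

variable {n : ℕ}

theorem m_add_m (heven : Even n) : ((n / 2 : ℕ) : ZMod n) + ((n / 2 : ℕ) : ZMod n) = 0 := by
  rw [← Nat.cast_add]
  obtain ⟨k, hk⟩ := heven
  have : n / 2 + n / 2 = n := by omega
  rw [this, ZMod.natCast_self]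

theorem eq_zero_or_half (hn : 4 ≤ n) (heven : Even n) (j : ZMod n) (hj : j + j = 0) :
    j = 0 ∨ j = ((n / 2 : ℕ) : ZMod n) := by
  haveI : NeZero n := ⟨by omega⟩
  have hv : j = ((j.val : ℕ) : ZMod n) := (ZMod.natCast_zmod_val j).symm
  rw [hv, ← Nat.cast_add, ZMod.natCast_eq_zero_iff] at hj
  have hlt : j.val < n := ZMod.val_lt j
  have : j.val + j.val = 0 ∨ j.val + j.val = n := by
    rcases hj with ⟨c, hc⟩
    have hlt2 : c < 2 := by
      rcases Nat.eq_zero_or_pos n with h0 | h0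
      · omega
      · by_contra hcc
        push_neg at hcc
        nlinarith
    interval_cases c <;> omega
  obtain ⟨k, hk⟩ := heven
  rcases this with h | h
  · left; rw [hv]; have hz : j.val = 0 := by omega
    simp [hz]
  · right; rw [hv]; congr 1; omega

theorem mem_center_iff' (hn : 4 ≤ n) (heven : Even n) (g : DihedralGroup n) :
    g ∈ Subgroup.center (DihedralGroup n) ↔
      g = 1 ∨ g = r ((n / 2 : ℕ) : ZMod n) := by
  rw [Subgroup.mem_center_iff]
  constructor
  · intro h
    match g with
    | r j =>
      have := h (sr 0)
      simp only [sr_mul_r, r_mul_sr, zero_add, zero_sub, sr.injEq] at this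
      have hj : j + j = 0 := by linear_combination this
      rcases eq_zero_or_half hn heven j hj with h0 | h0
      · left; rw [h0, one_def]
      · right; rw [h0]
    | sr j =>
      exfalso
      have := h (r 1)
      simp only [r_mul_sr, sr_mul_r, sr.injEq] at this
      have h2 : (1 : ZMod n) + 1 = 0 := by linear_combination -this
      have : ((2 : ℕ) : ZMod n) = 0 := by push_cast; linear_combination h2
      rw [ZMod.natCast_eq_zero_iff] at this
      have := Nat.le_of_dvd (by norm_num) this
      omega
  · rintro (rfl | rfl) g'
    · simp
    · have hm : -((n / 2 : ℕ) : ZMod n) = ((n / 2 : ℕ) : ZMod n) :=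
        neg_eq_of_add_eq_zero_left (m_add_m heven)
      match g' with
      | r j => simp [add_comm]
      | sr j => simp [sub_eq_add_neg, hm]

end

end DihedralPartitionAux

open DihedralGroup DihedralPartitionAux in
theorem dihedral_strict_center_partition (n : ℕ) (hn : 4 ≤ n) (heven : Even n) :
    ∃ P : Finset (Subgroup (DihedralGroup n)),
      IsStrictPartition (Subgroup.center (DihedralGroup n)) P := by
  classical
  haveI : NeZero n := ⟨by omega⟩
  set m : ZMod n := ((n / 2 : ℕ) : ZMod n) with hm
  have h2 : m + m = 0 := m_add_m heven
  have hmne : -m = m := neg_eq_of_add_eq_zero_left h2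
  -- basic facts
  have hone_ne_m : (1 : ZMod n) ≠ m := by
    intro h
    have h1 : (1 : ZMod n).val = 1 := by
      haveI : Fact (1 < n) := ⟨by omega⟩
      exact ZMod.val_one n
    have h2' : m.val = n / 2 := ZMod.val_cast_of_lt (by omega)
    rw [h] at h1; omega
  have hone_ne_zero : (1 : ZMod n) ≠ 0 := by
    intro h
    have h1 : (1 : ZMod n).val = 1 := by
      haveI : Fact (1 < n) := ⟨by omega⟩
      exact ZMod.val_one n
    rw [h] at h1; simp [ZMod.val_zero] at h1
  have hcenter : ∀ g : DihedralGroup n,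
      g ∈ Subgroup.center (DihedralGroup n) ↔ g = 1 ∨ g = r m :=
    mem_center_iff' hn heven
  -- klein i = klein (i + m)
  have klein_add : ∀ i : ZMod n, klein m h2 i = klein m h2 (i + m) := by
    intro i
    ext g
    have him : i + m + m = i := by rw [add_assoc, h2, add_zero]
    simp only [mem_klein, him]
    tauto
  have sr_mem_klein : ∀ i k : ZMod n, sr k ∈ klein m h2 i → klein m h2 i = klein m h2 k := by
    intro i k hk
    rcases mem_klein.1 hk with h | h | h | h
    · exact absurd h (by simp [-r_zero, one_def])
    · exact absurd h (by simp)
    · rw [sr.injEq] at h; rw [h]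
    · rw [sr.injEq] at h; rw [h, ← klein_add]
  have center_le_klein : ∀ i : ZMod n,
      Subgroup.center (DihedralGroup n) ≤ klein m h2 i := by
    intro i g hg
    rcases (hcenter g).1 hg with rfl | rfl
    · exact (klein m h2 i).one_mem
    · exact mem_klein.2 (Or.inr (Or.inl rfl))
  have center_le_rot : Subgroup.center (DihedralGroup n) ≤ rot n := by
    intro g hg
    rcases (hcenter g).1 hg with rfl | rfl
    · exact (rot n).one_mem
    · exact ⟨m, rfl⟩
  -- the partition
  refine ⟨insert (rot n) (Finset.image (fun i => klein m h2 i) Finset.univ), ?_, ?_, ?_, ?_⟩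
  · refine Finset.one_lt_card_iff.2 ?_
    refine ⟨rot n, klein m h2 0, Finset.mem_insert_self _ _,
      Finset.mem_insert_of_mem (Finset.mem_image_of_mem _ (Finset.mem_univ 0)), ?_⟩
    intro h
    have : sr 0 ∈ rot n := h ▸ mem_klein.2 (Or.inr (Or.inr (Or.inl rfl)))
    obtain ⟨j, hj⟩ := this
    exact absurd hj (by simp)
  · intro H hH
    rcases Finset.mem_insert.1 hH with rfl | hH
    · intro h
      have : sr 0 ∈ rot n := h ▸ Subgroup.mem_top _
      obtain ⟨j, hj⟩ := this
      exact absurd hj (by simp)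
    · obtain ⟨i, _, rfl⟩ := Finset.mem_image.1 hH
      intro h
      have : r 1 ∈ klein m h2 i := h ▸ Subgroup.mem_top _
      rcases mem_klein.1 this with h' | h' | h' | h'
      · rw [one_def, r.injEq] at h'; exact hone_ne_zero h'
      · rw [r.injEq] at h'; exact hone_ne_m h'
      · exact absurd h' (by simp)
      · exact absurd h' (by simp)
  · intro g
    match g with
    | r j => exact ⟨rot n, Finset.mem_insert_self _ _, ⟨j, rfl⟩⟩
    | sr j =>
      exact ⟨klein m h2 j,
        Finset.mem_insert_of_mem (Finset.mem_image_of_mem _ (Finset.mem_univ j)),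
        mem_klein.2 (Or.inr (Or.inr (Or.inl rfl)))⟩
  · -- intersections
    have rot_inf : ∀ i : ZMod n,
        rot n ⊓ klein m h2 i = Subgroup.center (DihedralGroup n) := by
      intro i
      apply le_antisymm
      · rintro g ⟨⟨j, rfl⟩, hk⟩
        rw [hcenter]
        rcases mem_klein.1 hk with h' | h' | h' | h'
        · exact Or.inl h'
        · exact Or.inr h'
        · exact absurd h' (by simp)
        · exact absurd h' (by simp)
      · exact le_inf center_le_rot (center_le_klein i)
    have klein_inf : ∀ i j : ZMod n, klein m h2 i ≠ klein m h2 j →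
        klein m h2 i ⊓ klein m h2 j = Subgroup.center (DihedralGroup n) := by
      intro i j hne
      apply le_antisymm
      · rintro g ⟨hi, hj⟩
        rw [hcenter]
        match g with
        | r k =>
          rcases mem_klein.1 hi with h' | h' | h' | h'
          · exact Or.inl h'
          · exact Or.inr h'
          · exact absurd h' (by simp)
          · exact absurd h' (by simp)
        | sr k =>
          exfalso
          exact hne ((sr_mem_klein i k hi).trans (sr_mem_klein j k hj).symm)
      · exact le_inf (center_le_klein i) (center_le_klein j)
    intro H hH K hK hne
    rcases Finset.mem_insert.1 hH with rfl | hH' <;>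
      rcases Finset.mem_insert.1 hK with rfl | hK'
    · exact absurd rfl hne
    · obtain ⟨j, _, rfl⟩ := Finset.mem_image.1 hK'
      exact rot_inf j
    · obtain ⟨i, _, rfl⟩ := Finset.mem_image.1 hH'
      rw [inf_comm]; exact rot_inf i
    · obtain ⟨i, _, rfl⟩ := Finset.mem_image.1 hH'
      obtain ⟨j, _, rfl⟩ := Finset.mem_image.1 hK'
      exact klein_inf i j hne
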